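/- (Inequality (16) in the proof of Theorem 2) Fix costs c_i and qualities q_i, let B ≥ 1 and ρ ∈ [0,1]. Let (O, p^OPT) be an optimal solution to the joint sequencing and pricing problem P.B (O duplicate-free, |O| ≤ B, f(O, p^OPT) ≥ f(L, p) for all duplicate-free L with |L| ≤ B and all prices p), with p^OPT_i ≥ c_i for all i and f(O, p^OPT) > 0. Then there exists a triple (𝒮, y, p) feasible for P.B.1 — y ∉ 𝒮, Π_{i∈𝒮} θ_i ≥ ρ, |𝒮| < B — such that g(𝒮 ∪ {y}, p) ≥ (1 − ρ) f(O, p^OPT); hence the optimal value of P.B.1 is at least (1 − ρ) f(O, p^OPT). -/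

import Mathlib

/-- MNL expected revenue of a finite set `S` of products, where product `i`
has revenue `α i` and preference weight `β i`. -/
noncomputable def g (α β : ℕ → ℝ) (S : Finset ℕ) : ℝ :=
  (∑ i ∈ S, α i * β i) / ((∑ i ∈ S, β i) + 1)

/-- Reachability of (0-based) position `t` of the sequence `S` under the
cascade browse model: the product of the continuation probabilities of all
earlier products. -/
noncomputable def reach (θ : ℕ → ℝ) (S : List ℕ) (t : ℕ) : ℝ :=
  ∏ j ∈ Finset.range t, θ (S.getD j 0)

/-- Expected revenue of a sequence of products `S` under the cascade browse
model combined with the MNL choice model. -/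
noncomputable def f (α β θ : ℕ → ℝ) (S : List ℕ) : ℝ :=
  (∑ t ∈ Finset.range (S.length - 1),
      reach θ S t * (1 - θ (S.getD t 0)) * g α β (S.take (t + 1)).toFinset)
    + reach θ S (S.length - 1) * g α β S.toFinset
/-- MNL expected revenue of a finite set `S` of products at prices `p`, where
product `i` has quality `q i` and cost `c i`. -/
noncomputable def gp (q c p : ℕ → ℝ) (S : Finset ℕ) : ℝ :=
  (∑ i ∈ S, (p i - c i) * Real.exp (q i - p i)) /
    ((∑ i ∈ S, Real.exp (q i - p i)) + 1)

/-- Expected revenue of a sequence of products `S` at prices `p` under the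
cascade browse model combined with the MNL choice model. -/
noncomputable def fp (q c θ p : ℕ → ℝ) (S : List ℕ) : ℝ :=
  (∑ t ∈ Finset.range (S.length - 1),
      reach θ S t * (1 - θ (S.getD t 0)) * gp q c p (S.take (t + 1)).toFinset)
    + reach θ S (S.length - 1) * gp q c p S.toFinset

/-! ### Auxiliary lemmas -/

lemma gp_nonneg (q c p : ℕ → ℝ) (hp : ∀ i, c i ≤ p i) (S : Finset ℕ) :
    0 ≤ gp q c p S := by
  unfold gp
  apply div_nonneg
  · exact Finset.sum_nonneg fun i _ =>
      mul_nonneg (by linarith [hp i]) (Real.exp_nonneg _)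
  · positivity

lemma gp_union_le (q c p : ℕ → ℝ) (hp : ∀ i, c i ≤ p i) {A B : Finset ℕ}
    (hd : Disjoint A B) : gp q c p (A ∪ B) ≤ gp q c p A + gp q c p B := by
  unfold gp
  rw [Finset.sum_union hd, Finset.sum_union hd]
  have hNA : 0 ≤ ∑ i ∈ A, (p i - c i) * Real.exp (q i - p i) :=
    Finset.sum_nonneg fun i _ => mul_nonneg (by linarith [hp i]) (Real.exp_nonneg _)
  have hNB : 0 ≤ ∑ i ∈ B, (p i - c i) * Real.exp (q i - p i) :=
    Finset.sum_nonneg fun i _ => mul_nonneg (by linarith [hp i]) (Real.exp_nonneg _)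
  have hDA : 0 ≤ ∑ i ∈ A, Real.exp (q i - p i) :=
    Finset.sum_nonneg fun i _ => Real.exp_nonneg _
  have hDB : 0 ≤ ∑ i ∈ B, Real.exp (q i - p i) :=
    Finset.sum_nonneg fun i _ => Real.exp_nonneg _
  rw [add_div]
  gcongr
  · linarith
  · linarith

lemma reach_nonneg (θ : ℕ → ℝ) (hθ : ∀ i, 0 ≤ θ i) (O : List ℕ) (t : ℕ) :
    0 ≤ reach θ O t :=
  Finset.prod_nonneg fun _ _ => hθ _

lemma reach_succ (θ : ℕ → ℝ) (O : List ℕ) (t : ℕ) :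
    reach θ O (t + 1) = reach θ O t * θ (O.getD t 0) :=
  Finset.prod_range_succ _ _

lemma reach_antitone (θ : ℕ → ℝ) (hθ : ∀ i, 0 ≤ θ i ∧ θ i ≤ 1) (O : List ℕ) :
    Antitone (reach θ O) := by
  apply antitone_nat_of_succ_le
  intro n
  rw [reach_succ]
  calc reach θ O n * θ (O.getD n 0) ≤ reach θ O n * 1 :=
        mul_le_mul_of_nonneg_left (hθ _).2 (reach_nonneg θ (fun i => (hθ i).1) O n)
    _ = reach θ O n := mul_one _

lemma sum_w (θ : ℕ → ℝ) (O : List ℕ) (n : ℕ) :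
    ∑ t ∈ Finset.range n, reach θ O t * (1 - θ (O.getD t 0)) = 1 - reach θ O n := by
  induction n with
  | zero => simp [reach]
  | succ n ih => rw [Finset.sum_range_succ, ih, reach_succ]; ring

lemma getD_drop' (O : List ℕ) (n s : ℕ) :
    (O.drop n).getD s 0 = O.getD (n + s) 0 := by
  simp [List.getD_eq_getElem?_getD, List.getElem?_drop]

lemma reach_add (θ : ℕ → ℝ) (O : List ℕ) (a b : ℕ) :
    reach θ O (a + b) = reach θ O a * reach θ (O.drop a) b := by
  unfold reach
  rw [Finset.prod_range_add]
  congr 1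
  refine Finset.prod_congr rfl fun j _ => ?_
  rw [getD_drop']

lemma take_map_prod (θ : ℕ → ℝ) (O : List ℕ) :
    ∀ t, t ≤ O.length → ((O.take t).map θ).prod = reach θ O t := by
  intro t
  induction t with
  | zero => intro _; simp [reach]
  | succ t ih =>
    intro ht
    have ht' : t < O.length := by omega
    rw [List.take_succ, List.getElem?_eq_getElem ht']
    rw [List.map_append, List.prod_append, ih (by omega), reach_succ]
    simp [List.getD_eq_getElem?_getD, List.getElem?_eq_getElem ht']

lemma prod_toFinset_take (θ : ℕ → ℝ) (O : List ℕ) (hO : O.Nodup) (t : ℕ)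
    (ht : t ≤ O.length) : ∏ i ∈ (O.take t).toFinset, θ i = reach θ O t := by
  rw [List.prod_toFinset θ (hO.sublist (List.take_sublist t O))]
  exact take_map_prod θ O t ht

/-- The tail identity: the part of `fp O` beyond position `n`, with the first
`n` products removed from the assortments, equals `reach n` times `fp` of the
suffix list `O.drop n`. -/
lemma tail_fp (q c θ p : ℕ → ℝ) (O : List ℕ) (n : ℕ) (hn : n ≤ O.length - 1)
    (h1 : 1 ≤ O.length) :
    (∑ t ∈ Finset.Ico n (O.length - 1), reach θ O t * (1 - θ (O.getD t 0)) *
        gp q c p (((O.drop n).take (t + 1 - n)).toFinset))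
      + reach θ O (O.length - 1) * gp q c p (O.drop n).toFinset
    = reach θ O n * fp q c θ p (O.drop n) := by
  have hlen : (O.drop n).length = O.length - n := List.length_drop
  unfold fp
  rw [mul_add, Finset.mul_sum, hlen]
  have hk' : O.length - n - 1 = O.length - 1 - n := by omega
  rw [Finset.sum_Ico_eq_sum_range]
  congr 1
  · rw [hk']
    refine Finset.sum_congr rfl fun s hs => ?_
    rw [reach_add θ O n s, getD_drop']
    have h2 : n + s + 1 - n = s + 1 := by omega
    rw [h2]
    ring
  · have h2 : O.length - 1 = n + (O.length - n - 1) := by omega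
    have h3 : (O.drop n).take (O.length - n) = O.drop n := by
      apply List.take_of_length_le
      rw [hlen]
    calc reach θ O (O.length - 1) * gp q c p (O.drop n).toFinset
        = reach θ O n * reach θ (O.drop n) (O.length - n - 1) *
            gp q c p (O.drop n).toFinset := by
          rw [h2, reach_add θ O n]
      _ = reach θ O n * (reach θ (O.drop n) (O.length - n - 1) *
            gp q c p (O.drop n).toFinset) := by ring

/-- inequality (16) in the proof of Theorem 2: the optimal
value of P.B.1 is at least `(1 - ρ) f(O, p^OPT)`. -/
theorem stmt17 (q c θ : ℕ → ℝ) (hθ : ∀ i, 0 ≤ θ i ∧ θ i ≤ 1)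
    (B : ℕ) (hB : 1 ≤ B) (ρ : ℝ) (hρ0 : 0 ≤ ρ) (hρ1 : ρ ≤ 1)
    (O : List ℕ) (pOPT : ℕ → ℝ) (hO : O.Nodup) (hOB : O.length ≤ B)
    (hp : ∀ i, c i ≤ pOPT i)
    (hopt : ∀ (L : List ℕ) (p : ℕ → ℝ), L.Nodup → L.length ≤ B →
        fp q c θ p L ≤ fp q c θ pOPT O)
    (hfO : 0 < fp q c θ pOPT O) :
    ∃ (S : Finset ℕ) (y : ℕ) (p : ℕ → ℝ), y ∉ S ∧ ρ ≤ ∏ i ∈ S, θ i ∧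
      S.card < B ∧
      (1 - ρ) * fp q c θ pOPT O ≤ gp q c p (insert y S) := by
  classical
  have hk : 1 ≤ O.length := by
    by_contra h
    push_neg at h
    have hO0 : O = [] := List.eq_nil_of_length_eq_zero (by omega)
    subst hO0
    simp [fp, reach, gp] at hfO
  set P : ℕ → Prop := fun t => ρ ≤ reach θ O t with hPdef
  set m := Nat.findGreatest P (O.length - 1) with hmdef
  have hm_le : m ≤ O.length - 1 := Nat.findGreatest_le _
  have hP0 : P 0 := by simp [hPdef, reach, hρ1]
  have hPm : ρ ≤ reach θ O m := Nat.findGreatest_spec (Nat.zero_le _) hP0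
  have hgt : ∀ t, m < t → t ≤ O.length - 1 → reach θ O t < ρ := by
    intro t h1 h2
    have := Nat.findGreatest_is_greatest (P := P) (n := O.length - 1) h1 h2
    simpa [hPdef, not_le] using this
  obtain ⟨th, hth_mem, hth_max⟩ :=
    Finset.exists_max_image (Finset.range (m + 1))
      (fun t => gp q c pOPT (O.take (t + 1)).toFinset) ⟨0, by simp⟩
  rw [Finset.mem_range] at hth_mem
  have hth_le : th ≤ m := by omega
  have hVth : ∀ t, t ≤ m → gp q c pOPT (O.take (t + 1)).toFinset ≤
      gp q c pOPT (O.take (th + 1)).toFinset := by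
    intro t ht
    exact hth_max t (Finset.mem_range.2 (by omega))
  have hthk : th < O.length := by omega
  have htake : O.take (th + 1) = O.take th ++ [O.getD th 0] := by
    rw [List.take_succ, List.getElem?_eq_getElem hthk]
    simp [List.getD_eq_getElem?_getD, List.getElem?_eq_getElem hthk]
  have hnd1 : (O.take (th + 1)).Nodup := hO.sublist (List.take_sublist _ _)
  have hynotmem : O.getD th 0 ∉ O.take th := by
    rw [htake] at hnd1
    have hd := List.disjoint_of_nodup_append hnd1
    intro hmem
    exact hd hmem (by simp)
  have hyS : O.getD th 0 ∉ (O.take th).toFinset := by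
    simpa [List.mem_toFinset] using hynotmem
  have hinsert : insert (O.getD th 0) (O.take th).toFinset = (O.take (th + 1)).toFinset := by
    rw [htake, List.toFinset_append]
    have h1 : [O.getD th 0].toFinset = {O.getD th 0} := by simp
    rw [h1, Finset.union_comm, ← Finset.insert_eq]
  refine ⟨(O.take th).toFinset, O.getD th 0, pOPT, hyS, ?_, ?_, ?_⟩
  · rw [prod_toFinset_take θ O hO th (by omega)]
    exact le_trans hPm (reach_antitone θ hθ O hth_le)
  · rw [List.toFinset_card_of_nodup (hO.sublist (List.take_sublist _ _)),
      List.length_take]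
    omega
  · rw [hinsert]
    have hwnn : ∀ t : ℕ, 0 ≤ reach θ O t * (1 - θ (O.getD t 0)) := fun t =>
      mul_nonneg (reach_nonneg θ (fun i => (hθ i).1) O t)
        (by linarith [(hθ (O.getD t 0)).2])
    have hrnn : ∀ t, (0:ℝ) ≤ reach θ O t := reach_nonneg θ (fun i => (hθ i).1) O
    have hfp_eq : fp q c θ pOPT O = (∑ t ∈ Finset.range (O.length - 1),
        reach θ O t * (1 - θ (O.getD t 0)) * gp q c pOPT (O.take (t + 1)).toFinset)
        + reach θ O (O.length - 1) * gp q c pOPT (O.take O.length).toFinset := by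
      rw [List.take_length]
      rfl
    by_cases hcase : O.length - 1 ≤ m
    · -- every position is feasible : Z ≤ V
      have hlast : gp q c pOPT (O.take O.length).toFinset ≤
          gp q c pOPT (O.take (th + 1)).toFinset := by
        have hlen : O.length = (O.length - 1) + 1 := by omega
        rw [hlen]
        exact hVth (O.length - 1) hcase
      have hZle : fp q c θ pOPT O ≤ gp q c pOPT (O.take (th + 1)).toFinset := by
        rw [hfp_eq]
        have h1 : (∑ t ∈ Finset.range (O.length - 1),
            reach θ O t * (1 - θ (O.getD t 0)) * gp q c pOPT (O.take (t + 1)).toFinset)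
            ≤ (1 - reach θ O (O.length - 1)) * gp q c pOPT (O.take (th + 1)).toFinset := by
          rw [← sum_w θ O (O.length - 1), Finset.sum_mul]
          refine Finset.sum_le_sum fun t ht => ?_
          rw [Finset.mem_range] at ht
          exact mul_le_mul_of_nonneg_left (hVth t (by omega)) (hwnn t)
        have h2 : reach θ O (O.length - 1) * gp q c pOPT (O.take O.length).toFinset
            ≤ reach θ O (O.length - 1) * gp q c pOPT (O.take (th + 1)).toFinset :=
          mul_le_mul_of_nonneg_left hlast (hrnn _)
        linarith [h1, h2]
      nlinarith [hZle, hfO, hρ0]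
    · -- positions beyond m are cut off using the suffix list
      have hmk : m + 1 ≤ O.length - 1 := by omega
      have hρn : reach θ O (m + 1) < ρ := hgt (m + 1) (by omega) hmk
      have hsplit : (∑ t ∈ Finset.range (O.length - 1),
          reach θ O t * (1 - θ (O.getD t 0)) * gp q c pOPT (O.take (t + 1)).toFinset)
          = (∑ t ∈ Finset.range (m + 1),
              reach θ O t * (1 - θ (O.getD t 0)) * gp q c pOPT (O.take (t + 1)).toFinset)
            + ∑ t ∈ Finset.Ico (m + 1) (O.length - 1),
                reach θ O t * (1 - θ (O.getD t 0)) * gp q c pOPT (O.take (t + 1)).toFinset := by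
        rw [Finset.range_eq_Ico,
          ← Finset.sum_Ico_consecutive _ (Nat.zero_le (m + 1)) hmk]
        rw [← Finset.range_eq_Ico]
      have hhead : (∑ t ∈ Finset.range (m + 1),
          reach θ O t * (1 - θ (O.getD t 0)) * gp q c pOPT (O.take (t + 1)).toFinset)
          ≤ (1 - reach θ O (m + 1)) * gp q c pOPT (O.take (th + 1)).toFinset := by
        rw [← sum_w θ O (m + 1), Finset.sum_mul]
        refine Finset.sum_le_sum fun t ht => ?_
        rw [Finset.mem_range] at ht
        exact mul_le_mul_of_nonneg_left (hVth t (by omega)) (hwnn t)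
      -- subadditivity of gp over the split of each long prefix
      have hsub : ∀ t, m + 1 ≤ t → gp q c pOPT (O.take t).toFinset ≤
          gp q c pOPT (O.take (m + 1)).toFinset +
            gp q c pOPT ((O.drop (m + 1)).take (t - (m + 1))).toFinset := by
        intro t hnt
        have hdecomp : O.take t = O.take (m + 1) ++ (O.drop (m + 1)).take (t - (m + 1)) := by
          conv_lhs => rw [show t = (m + 1) + (t - (m + 1)) by omega]
          exact List.take_add
        have hndt : (O.take (m + 1) ++ (O.drop (m + 1)).take (t - (m + 1))).Nodup := by
          rw [← hdecomp]
          exact hO.sublist (List.take_sublist _ _)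
        have hdisj := List.disjoint_toFinset_iff_disjoint.2
          (List.disjoint_of_nodup_append hndt)
        rw [hdecomp, List.toFinset_append]
        exact gp_union_le q c pOPT hp hdisj
      have hIco_w : ∑ t ∈ Finset.Ico (m + 1) (O.length - 1),
          reach θ O t * (1 - θ (O.getD t 0))
          = reach θ O (m + 1) - reach θ O (O.length - 1) := by
        have h1 := sum_w θ O (m + 1)
        have h2 := sum_w θ O (O.length - 1)
        rw [Finset.range_eq_Ico] at h1 h2
        rw [← Finset.sum_Ico_consecutive (fun t => reach θ O t * (1 - θ (O.getD t 0)))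
          (Nat.zero_le (m + 1)) hmk] at h2
        linarith [h1, h2]
      have hfull : (O.drop (m + 1)).take (O.length - (m + 1)) = O.drop (m + 1) := by
        apply List.take_of_length_le
        rw [List.length_drop]
      have step1 : (∑ t ∈ Finset.Ico (m + 1) (O.length - 1),
            reach θ O t * (1 - θ (O.getD t 0)) * gp q c pOPT (O.take (t + 1)).toFinset)
          + reach θ O (O.length - 1) * gp q c pOPT (O.take O.length).toFinset
          ≤ (∑ t ∈ Finset.Ico (m + 1) (O.length - 1),
              reach θ O t * (1 - θ (O.getD t 0)) *
                (gp q c pOPT (O.take (m + 1)).toFinset +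
                  gp q c pOPT ((O.drop (m + 1)).take (t + 1 - (m + 1))).toFinset))
            + reach θ O (O.length - 1) *
                (gp q c pOPT (O.take (m + 1)).toFinset +
                  gp q c pOPT (O.drop (m + 1)).toFinset) := by
        refine add_le_add (Finset.sum_le_sum fun t ht => ?_) ?_
        · exact mul_le_mul_of_nonneg_left (hsub (t + 1) (by
            rw [Finset.mem_Ico] at ht; omega)) (hwnn t)
        · have := hsub O.length (by omega)
          rw [hfull] at this
          exact mul_le_mul_of_nonneg_left this (hrnn _)
      have step2 : (∑ t ∈ Finset.Ico (m + 1) (O.length - 1),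
              reach θ O t * (1 - θ (O.getD t 0)) *
                (gp q c pOPT (O.take (m + 1)).toFinset +
                  gp q c pOPT ((O.drop (m + 1)).take (t + 1 - (m + 1))).toFinset))
            + reach θ O (O.length - 1) *
                (gp q c pOPT (O.take (m + 1)).toFinset +
                  gp q c pOPT (O.drop (m + 1)).toFinset)
          = reach θ O (m + 1) * gp q c pOPT (O.take (m + 1)).toFinset
            + ((∑ t ∈ Finset.Ico (m + 1) (O.length - 1),
                reach θ O t * (1 - θ (O.getD t 0)) *
                  gp q c pOPT ((O.drop (m + 1)).take (t + 1 - (m + 1))).toFinset)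
              + reach θ O (O.length - 1) * gp q c pOPT (O.drop (m + 1)).toFinset) := by
        simp only [mul_add, Finset.sum_add_distrib]
        rw [← Finset.sum_mul, hIco_w]
        ring
      have step3 : (∑ t ∈ Finset.Ico (m + 1) (O.length - 1),
            reach θ O t * (1 - θ (O.getD t 0)) *
              gp q c pOPT ((O.drop (m + 1)).take (t + 1 - (m + 1))).toFinset)
          + reach θ O (O.length - 1) * gp q c pOPT (O.drop (m + 1)).toFinset
          = reach θ O (m + 1) * fp q c θ pOPT (O.drop (m + 1)) :=
        tail_fp q c θ pOPT O (m + 1) hmk hk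
      have hsuffix : fp q c θ pOPT (O.drop (m + 1)) ≤ fp q c θ pOPT O :=
        hopt (O.drop (m + 1)) pOPT (hO.sublist (List.drop_sublist _ _))
          (le_trans (by rw [List.length_drop]; omega) le_rfl |>.trans hOB)
      have hfinal : reach θ O (m + 1) * fp q c θ pOPT (O.drop (m + 1))
          ≤ ρ * fp q c θ pOPT O := by
        calc reach θ O (m + 1) * fp q c θ pOPT (O.drop (m + 1))
            ≤ reach θ O (m + 1) * fp q c θ pOPT O :=
              mul_le_mul_of_nonneg_left hsuffix (hrnn _)
          _ ≤ ρ * fp q c θ pOPT O :=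
              mul_le_mul_of_nonneg_right (le_of_lt hρn) (le_of_lt hfO)
      have hGnV : reach θ O (m + 1) * gp q c pOPT (O.take (m + 1)).toFinset
          ≤ reach θ O (m + 1) * gp q c pOPT (O.take (th + 1)).toFinset :=
        mul_le_mul_of_nonneg_left (hVth m le_rfl) (hrnn _)
      have hcomb : fp q c θ pOPT O ≤ gp q c pOPT (O.take (th + 1)).toFinset
          + ρ * fp q c θ pOPT O := by
        linarith [hfp_eq, hsplit, hhead, step1, step2, step3, hfinal, hGnV]
      linarith [hcomb]
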